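/- Let G be a nontrivial subgroup of PSL(2,ℂ) whose pointwise stabilizer under the conjugation action of PSL(2,ℂ) (i.e., the centralizer of G in PSL(2,ℂ)) is not discrete. Then there exists a nonempty set Λ ⊆ ℂP¹ of cardinality at most 2 that is fixed pointwise by every element of G. -/

import Mathlib

open Filter Matrix Topology

noncomputable section

/-- We model PSL(2,ℂ) by SL(2,ℂ) acting on the Riemann sphere `OnePoint ℂ = ℂ ∪ {∞}`
by Möbius transformations (the kernel of the action is the center {±1}). -/
abbrev SL2C := Matrix.SpecialLinearGroup (Fin 2) ℂ

instance : TopologicalSpace SL2C :=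
  TopologicalSpace.induced (fun g => (g : Matrix (Fin 2) (Fin 2) ℂ)) inferInstance

/-- The Möbius action of an element of SL(2,ℂ) on the Riemann sphere ℂP¹ = ℂ ∪ {∞}. -/
def moebius (g : SL2C) : OnePoint ℂ → OnePoint ℂ := fun z =>
  Option.casesOn (show Option ℂ from z)
    (if g.1 1 0 = 0 then (OnePoint.infty : OnePoint ℂ)
     else ((g.1 0 0 / g.1 1 0 : ℂ) : OnePoint ℂ))
    (fun w => if g.1 1 0 * w + g.1 1 1 = 0 then (OnePoint.infty : OnePoint ℂ)
      else (((g.1 0 0 * w + g.1 0 1) / (g.1 1 0 * w + g.1 1 1) : ℂ) : OnePoint ℂ))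

/-- `g` acts as the identity on ℂP¹, i.e. `g` represents the identity of PSL(2,ℂ). -/
def IsIdentity (g : SL2C) : Prop := ∀ z : OnePoint ℂ, moebius g z = z

/-- `g` fixes the point `z` of ℂP¹. -/
def Fixes (g : SL2C) (z : OnePoint ℂ) : Prop := moebius g z = z

/-- The square of the trace; this is a well-defined invariant of an element of PSL(2,ℂ). -/
def trSq (g : SL2C) : ℂ := (Matrix.trace (g : Matrix (Fin 2) (Fin 2) ℂ)) ^ 2

/-- Elliptic: not the identity (in PSL(2,ℂ)) and tr² ∈ [0,4). -/
def IsElliptic (g : SL2C) : Prop :=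
  ¬ IsIdentity g ∧ ∃ r : ℝ, 0 ≤ r ∧ r < 4 ∧ trSq g = (r : ℂ)

/-- Hyperbolic (loxodromic): tr² ∈ ℂ \ [0,4]. -/
def IsHyperbolic (g : SL2C) : Prop :=
  ∀ r : ℝ, 0 ≤ r → r ≤ 4 → trSq g ≠ (r : ℂ)

/-- Parabolic: not the identity in PSL(2,ℂ) and exactly one fixed point on ℂP¹. -/
def IsParabolic (g : SL2C) : Prop := ¬ IsIdentity g ∧ ∃! z : OnePoint ℂ, Fixes g z

/-- Parabolic, via traces: not the identity in PSL(2,ℂ) and tr² = 4. -/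
def IsParabolicTr (g : SL2C) : Prop := ¬ IsIdentity g ∧ trSq g = 4

/-- The (preimage in SL(2,ℂ) of the) pointwise stabilizer (centralizer) of `G`
under the conjugation action of PSL(2,ℂ): all `h` commuting with every `g ∈ G`
as Möbius transformations. -/
def pslCentralizer (G : Subgroup SL2C) : Set SL2C :=
  {h : SL2C | ∀ g ∈ G, ∀ z : OnePoint ℂ, moebius (h * g) z = moebius (g * h) z}

lemma moebius_infty (g : SL2C) : moebius g (OnePoint.infty) =
    (if g.1 1 0 = 0 then (OnePoint.infty : OnePoint ℂ)
     else ((g.1 0 0 / g.1 1 0 : ℂ) : OnePoint ℂ)) := rfl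
lemma moebius_coe (g : SL2C) (w : ℂ) : moebius g (w : OnePoint ℂ) =
    (if g.1 1 0 * w + g.1 1 1 = 0 then (OnePoint.infty : OnePoint ℂ)
      else (((g.1 0 0 * w + g.1 0 1) / (g.1 1 0 * w + g.1 1 1) : ℂ) : OnePoint ℂ)) := rfl
lemma det_entries (g : SL2C) : g.1 0 0 * g.1 1 1 - g.1 0 1 * g.1 1 0 = 1 := by
  have := g.2; rwa [Matrix.det_fin_two] at this
lemma mul_entry (g h : SL2C) (i j : Fin 2) :
    (g * h).1 i j = g.1 i 0 * h.1 0 j + g.1 i 1 * h.1 1 j := by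
  simp [Matrix.SpecialLinearGroup.coe_mul, Matrix.mul_apply, Fin.sum_univ_two]

lemma moebius_mul (g h : SL2C) (z : OnePoint ℂ) :
    moebius (g * h) z = moebius g (moebius h z) := by
  have dg := det_entries g
  have dh := det_entries h
  have hdiv : ∀ X Y z : ℂ, z ≠ 0 → X/z/(Y/z) = X/Y := by
    intro X Y z hz
    rcases eq_or_ne Y 0 with rfl|hY
    · simp
    · field_simp
  set a := g.1 0 0 with ha; set b := g.1 0 1 with hb
  set c := g.1 1 0 with hc; set d := g.1 1 1 with hd
  set p := h.1 0 0 with hp; set q := h.1 0 1 with hq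
  set r := h.1 1 0 with hr; set s := h.1 1 1 with hs
  cases z using OnePoint.rec with
  | infty =>
    rw [moebius_infty (g*h), moebius_infty h]
    simp only [mul_entry, ← ha, ← hb, ← hc, ← hd, ← hp, ← hq, ← hr, ← hs]
    by_cases h1 : r = 0
    · have hp0 : p ≠ 0 := by
        intro h0; rw [h0, h1] at dh; simp at dh
      rw [if_pos h1]
      rw [moebius_infty]
      simp only [← hc, ← ha]
      by_cases h2 : c = 0
      · rw [if_pos h2, if_pos (by rw [h1, h2]; ring)]
      · rw [if_neg h2, if_neg (by rw [h1]; simpa using mul_ne_zero h2 hp0)]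
        rw [OnePoint.coe_eq_coe, h1]
        rw [mul_zero, add_zero, mul_zero, add_zero, mul_comm a p, mul_comm c p,
          mul_div_mul_left _ _ hp0]
    · rw [if_neg h1, moebius_coe]
      simp only [← ha, ← hb, ← hc, ← hd]
      have hkey : c * (p / r) + d = (c*p + d*r)/r := by field_simp
      by_cases h2 : c*p + d*r = 0
      · rw [if_pos h2, if_pos (by rw [hkey, h2, zero_div])]
      · rw [if_neg h2, if_neg (by rw [hkey]; exact div_ne_zero h2 h1)]
        rw [OnePoint.coe_eq_coe]
        have hkey2 : a * (p / r) + b = (a*p + b*r)/r := by field_simp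
        rw [hkey, hkey2, hdiv _ _ _ h1]
  | coe w =>
    rw [moebius_coe (g*h) w, moebius_coe h w]
    simp only [mul_entry, ← ha, ← hb, ← hc, ← hd, ← hp, ← hq, ← hr, ← hs]
    by_cases h1 : r * w + s = 0
    · have hnum : p * w + q ≠ 0 := by
        intro h0
        have : (p*s - q*r) * w = 0 := by linear_combination s * h0 - q * h1 + w*0
        have hw1 : w = 0 := by rwa [dh, one_mul] at this
        rw [hw1] at h0 h1; simp at h0 h1
        rw [h0, h1] at dh; simp at dh
      rw [if_pos h1, moebius_infty]
      simp only [← hc, ← ha]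
      by_cases h2 : c = 0
      · rw [if_pos h2]
        rw [if_pos (by linear_combination c * (p*w+q) + d * h1 + (p*w+q)*h2 - c*(p*w+q))]
      · rw [if_neg h2]
        have hcond : (c*p + d*r) * w + (c*q + d*s) = c * (p*w+q) := by
          linear_combination d * h1
        rw [if_neg (by rw [hcond]; exact mul_ne_zero h2 hnum)]
        rw [OnePoint.coe_eq_coe]
        have : (a*p + b*r) * w + (a*q + b*s) = a * (p*w+q) := by linear_combination b * h1
        rw [this, hcond]
        rw [mul_div_mul_right _ _ hnum]
    · rw [if_neg h1, moebius_coe]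
      simp only [← ha, ← hb, ← hc, ← hd]
      have hkey : c * ((p*w+q) / (r*w+s)) + d = ((c*p+d*r)*w + (c*q+d*s))/(r*w+s) := by
        rw [mul_div_assoc', div_add' _ _ _ h1]; congr 1; ring
      by_cases h2 : (c*p + d*r)*w + (c*q+d*s) = 0
      · rw [if_pos h2, if_pos (by rw [hkey, h2, zero_div])]
      · rw [if_neg h2, if_neg (by rw [hkey]; exact div_ne_zero h2 h1)]
        rw [OnePoint.coe_eq_coe]
        have hkey2 : a * ((p*w+q) / (r*w+s)) + b = ((a*p+b*r)*w + (a*q+b*s))/(r*w+s) := by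
          rw [mul_div_assoc', div_add' _ _ _ h1]; congr 1; ring
        rw [hkey, hkey2, hdiv _ _ _ h1]

lemma moebius_one (z : OnePoint ℂ) : moebius 1 z = z := by
  cases z using OnePoint.rec with
  | infty =>
    rw [moebius_infty]
    simp
  | coe w =>
    rw [moebius_coe]
    simp

lemma moebius_inj (g : SL2C) : Function.Injective (moebius g) := by
  intro z1 z2 hz
  have : ∀ z, moebius g⁻¹ (moebius g z) = z := by
    intro z; rw [← moebius_mul, inv_mul_cancel, moebius_one]
  rw [← this z1, ← this z2, hz]

lemma entries_one : (1 : SL2C).1 0 0 = 1 ∧ (1 : SL2C).1 0 1 = 0 ∧ (1 : SL2C).1 1 0 = 0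
    ∧ (1 : SL2C).1 1 1 = 1 := by
  simp [Matrix.SpecialLinearGroup.coe_one]

lemma isIdentity_one : IsIdentity (1 : SL2C) := moebius_one

lemma isIdentity_neg_one : IsIdentity (-1 : SL2C) := by
  intro z
  have e : ((-1 : SL2C)).1 = -(1 : Matrix (Fin 2) (Fin 2) ℂ) := by
    simp
  cases z using OnePoint.rec with
  | infty =>
    rw [moebius_infty]
    simp [e, Matrix.one_apply]
  | coe w =>
    rw [moebius_coe]
    simp [e, Matrix.one_apply]

lemma eq_pm_of_isIdentity (g : SL2C) (hg : IsIdentity g) : g = 1 ∨ g = -1 := by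
  have h8 : moebius g (OnePoint.infty) = OnePoint.infty := hg _
  have h0 : moebius g ((0 : ℂ) : OnePoint ℂ) = ((0:ℂ) : OnePoint ℂ) := hg _
  have h1 : moebius g ((1 : ℂ) : OnePoint ℂ) = ((1:ℂ) : OnePoint ℂ) := hg _
  have det := det_entries g
  rw [moebius_infty] at h8
  rw [moebius_coe] at h0 h1
  have hc : g.1 1 0 = 0 := by
    by_contra hne
    rw [if_neg hne] at h8
    exact OnePoint.coe_ne_infty _ h8
  rw [hc] at det h0 h1
  simp only [zero_mul, zero_add] at h0 h1
  have hd : g.1 1 1 ≠ 0 := by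
    intro h; rw [h] at det; simp at det
  rw [if_neg hd, OnePoint.coe_eq_coe] at h0 h1
  have hb : g.1 0 1 = 0 := by
    have := h0
    field_simp at this
    simpa using this
  rw [hb] at h1 det
  rw [mul_one, add_zero] at h1
  have had : g.1 0 0 = g.1 1 1 := by
    field_simp at h1
    exact h1
  rw [had] at det
  simp only [mul_zero, sub_zero, zero_mul] at det
  have hpm : g.1 1 1 = 1 ∨ g.1 1 1 = -1 := by
    have hfac : (g.1 1 1 - 1) * (g.1 1 1 + 1) = 0 := by linear_combination det
    rcases mul_eq_zero.1 hfac with h | h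
    · left; linear_combination h
    · right; linear_combination h
  rcases hpm with h | h
  · left
    apply Subtype.ext
    ext i j
    fin_cases i <;> fin_cases j <;>
      simp [hb, hc, had, h, Matrix.SpecialLinearGroup.coe_one, Matrix.one_apply]
  · right
    apply Subtype.ext
    have e : ((-1 : SL2C)).1 = -(1 : Matrix (Fin 2) (Fin 2) ℂ) := by simp
    rw [e]
    ext i j
    fin_cases i <;> fin_cases j <;>
      simp [hb, hc, had, h, Matrix.one_apply]

/-- Homogeneous-coordinates representative of a point of ℂP¹. -/
def vrep : OnePoint ℂ → (Fin 2 → ℂ) := fun z =>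
  Option.casesOn (show Option ℂ from z) ![1, 0] (fun w => ![w, 1])

lemma vrep_infty : vrep OnePoint.infty = ![1, 0] := rfl
lemma vrep_coe (w : ℂ) : vrep (w : OnePoint ℂ) = ![w, 1] := rfl

lemma moebius_eq_pm (g₁ g₂ : SL2C) (hgg : ∀ z, moebius g₁ z = moebius g₂ z) :
    g₁ = g₂ ∨ g₁ = -g₂ := by
  have hid : IsIdentity (g₁ * g₂⁻¹) := by
    intro z
    rw [moebius_mul, hgg, ← moebius_mul, mul_inv_cancel, moebius_one]
  rcases eq_pm_of_isIdentity _ hid with h | h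
  · left
    have := congrArg (· * g₂) h
    simpa using this
  · right
    have := congrArg (· * g₂) h
    simpa using this

/-- The matrix-vector form of the Möbius action. -/
lemma rep_lemma (g : SL2C) (z : OnePoint ℂ) :
    ∃ μ : ℂ, μ ≠ 0 ∧ g.1 *ᵥ vrep z = μ • vrep (moebius g z) := by
  have det := det_entries g
  cases z using OnePoint.rec with
  | infty =>
    rw [moebius_infty, vrep_infty]
    by_cases hc : g.1 1 0 = 0
    · refine ⟨g.1 0 0, ?_, ?_⟩
      · intro h; rw [h, hc] at det; simp at det
      · rw [if_pos hc, vrep_infty]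
        funext i
        fin_cases i <;> simp [Matrix.mulVec, dotProduct, Fin.sum_univ_two, hc]
    · refine ⟨g.1 1 0, hc, ?_⟩
      rw [if_neg hc, vrep_coe]
      funext i
      fin_cases i <;>
        simp [Matrix.mulVec, dotProduct, Fin.sum_univ_two, hc] <;> field_simp
  | coe w =>
    rw [moebius_coe]
    by_cases hden : g.1 1 0 * w + g.1 1 1 = 0
    · refine ⟨g.1 0 0 * w + g.1 0 1, ?_, ?_⟩
      · intro h
        have : (g.1 0 0 * g.1 1 1 - g.1 0 1 * g.1 1 0) * w = 0 := by
          linear_combination g.1 1 1 * h - g.1 0 1 * hden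
        rw [det, one_mul] at this
        rw [this] at h hden
        simp at h hden
        rw [h, hden] at det; simp at det
      · rw [if_pos hden, vrep_infty, vrep_coe]
        funext i
        fin_cases i <;>
          simp [Matrix.mulVec, dotProduct, Fin.sum_univ_two] <;>
          linear_combination hden
    · refine ⟨g.1 1 0 * w + g.1 1 1, hden, ?_⟩
      rw [if_neg hden, vrep_coe, vrep_coe]
      funext i
      fin_cases i <;>
        simp [Matrix.mulVec, dotProduct, Fin.sum_univ_two] <;>
        rw [mul_div_assoc', mul_div_cancel_left₀ _ hden]

lemma vrep_indep {z₁ z₂ : OnePoint ℂ} (hne : z₁ ≠ z₂) :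
    vrep z₁ 0 * vrep z₂ 1 - vrep z₁ 1 * vrep z₂ 0 ≠ 0 := by
  cases z₁ using OnePoint.rec with
  | infty =>
    cases z₂ using OnePoint.rec with
    | infty => exact absurd rfl hne
    | coe w => rw [vrep_infty, vrep_coe]; simp
  | coe w₁ =>
    cases z₂ using OnePoint.rec with
    | infty => rw [vrep_infty, vrep_coe]; simp
    | coe w₂ =>
      rw [vrep_coe, vrep_coe]
      simp only [Matrix.cons_val_zero, Matrix.cons_val_one, Matrix.head_cons]
      intro h
      apply hne
      have : w₁ = w₂ := by linear_combination h
      rw [this]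

lemma mulVec_entries (M : Matrix (Fin 2) (Fin 2) ℂ) (v : Fin 2 → ℂ) :
    (M *ᵥ v) 0 = M 0 0 * v 0 + M 0 1 * v 1 ∧
    (M *ᵥ v) 1 = M 1 0 * v 0 + M 1 1 * v 1 := by
  constructor <;> simp [Matrix.mulVec, dotProduct, Fin.sum_univ_two]

/-- If `h` has two independent eigenvectors, the eigenvalues determine trace and det. -/
lemma eigen_trace_det (h : SL2C) (v₁ v₂ : Fin 2 → ℂ) (lam kap : ℂ)
    (hind : v₁ 0 * v₂ 1 - v₁ 1 * v₂ 0 ≠ 0)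
    (h1 : h.1 *ᵥ v₁ = lam • v₁) (h2 : h.1 *ᵥ v₂ = kap • v₂) :
    h.1 0 0 + h.1 1 1 = lam + kap ∧ lam * kap = 1 := by
  have det := det_entries h
  obtain ⟨e10, e11⟩ := mulVec_entries h.1 v₁
  obtain ⟨e20, e21⟩ := mulVec_entries h.1 v₂
  rw [h1] at e10 e11
  rw [h2] at e20 e21
  simp only [Pi.smul_apply, smul_eq_mul] at e10 e11 e20 e21
  set a := h.1 0 0; set b := h.1 0 1; set c := h.1 1 0; set d := h.1 1 1
  set p := v₁ 0; set q := v₁ 1; set r := v₂ 0; set s := v₂ 1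
  -- e10 : lam * p = a * p + b * q , etc (direction?)
  constructor
  · have key : (a + d - lam - kap) * (p * s - q * r) = 0 := by
      linear_combination -s * e10 + r * e11 + q * e20 - p * e21
    rcases mul_eq_zero.1 key with hk | hk
    · linear_combination hk
    · exact absurd hk hind
  · have key : (lam * kap - 1) * (p * s - q * r) = 0 := by
      linear_combination kap*s*e10 - kap*r*e11 + (a*p+b*q)*e21 - (c*p+d*q)*e20
        + (p*s-q*r)*det
    rcases mul_eq_zero.1 key with hk | hk
    · linear_combination hk
    · exact absurd hk hind

/-- A matrix with two independent eigenvectors of the same eigenvalue ±1 is ±1. -/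
lemma eigen_scalar (h : SL2C) (v₁ v₂ : Fin 2 → ℂ) (eps : ℂ)
    (hind : v₁ 0 * v₂ 1 - v₁ 1 * v₂ 0 ≠ 0)
    (h1 : h.1 *ᵥ v₁ = eps • v₁) (h2 : h.1 *ᵥ v₂ = eps • v₂) :
    h.1 = eps • (1 : Matrix (Fin 2) (Fin 2) ℂ) := by
  obtain ⟨e10, e11⟩ := mulVec_entries h.1 v₁
  obtain ⟨e20, e21⟩ := mulVec_entries h.1 v₂
  rw [h1] at e10 e11
  rw [h2] at e20 e21
  simp only [Pi.smul_apply, smul_eq_mul] at e10 e11 e20 e21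
  set a := h.1 0 0 with ha'; set b := h.1 0 1 with hb'
  set c := h.1 1 0 with hc'; set d := h.1 1 1 with hd'
  set p := v₁ 0; set q := v₁ 1; set r := v₂ 0; set s := v₂ 1
  have hA : a = eps := by
    have key : (a - eps) * (p * s - q * r) = 0 := by
      linear_combination q * e20 - s * e10
    rcases mul_eq_zero.1 key with hk | hk
    · linear_combination hk
    · exact absurd hk hind
  have hB : b = 0 := by
    have key : b * (p * s - q * r) = 0 := by
      linear_combination r * e10 - p * e20
    rcases mul_eq_zero.1 key with hk | hk
    · exact hk
    · exact absurd hk hind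
  have hC : c = 0 := by
    have key : c * (p * s - q * r) = 0 := by
      linear_combination q * e21 - s * e11
    rcases mul_eq_zero.1 key with hk | hk
    · exact hk
    · exact absurd hk hind
  have hD : d = eps := by
    have key : (d - eps) * (p * s - q * r) = 0 := by
      linear_combination r * e11 - p * e21
    rcases mul_eq_zero.1 key with hk | hk
    · linear_combination hk
    · exact absurd hk hind
  ext i j
  fin_cases i <;> fin_cases j <;>
    simp only [Matrix.smul_apply, Matrix.one_apply, smul_eq_mul] <;>
    simp [← ha', ← hb', ← hc', ← hd', hA, hB, hC, hD]

/-- Every Möbius transformation has a fixed point. -/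
lemma fix_exists (h : SL2C) : ∃ z, Fixes h z := by
  have det := det_entries h
  set a := h.1 0 0 with ha; set b := h.1 0 1 with hb
  set c := h.1 1 0 with hc; set d := h.1 1 1 with hd
  by_cases hc0 : c = 0
  · refine ⟨OnePoint.infty, ?_⟩
    rw [Fixes, moebius_infty, ← hc, if_pos hc0]
  · obtain ⟨e, he⟩ := IsAlgClosed.exists_pow_nat_eq ((d - a)^2 + 4*(b*c)) zero_lt_two
    set w := (a - d + e) / (2*c) with hw
    refine ⟨(w : OnePoint ℂ), ?_⟩
    rw [Fixes, moebius_coe]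
    simp only [← ha, ← hb, ← hc, ← hd]
    have hquad : c * w^2 + (d - a) * w - b = 0 := by
      have h4c : (4:ℂ)*c ≠ 0 := by simpa using hc0
      have hw2 : 2*c*w = a - d + e := by rw [hw]; field_simp
      have key : (4*c) * (c*w^2 + (d-a)*w - b) = 0 := by
        linear_combination (2*c*w + (a-d+e) + 2*(d-a)) * hw2 + he
      rcases mul_eq_zero.1 key with hk | hk
      · exact absurd hk h4c
      · exact hk
    by_cases hden : c * w + d = 0
    · exfalso
      have hnum : a * w + b = 0 := by linear_combination w * hden - hquad
      have : (a*d - b*c) * w = 0 := by linear_combination d * hnum - b * hden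
      rw [det, one_mul] at this
      rw [this] at hnum hden
      simp at hnum hden
      rw [hnum, hden] at det; simp at det
    · rw [if_neg hden, OnePoint.coe_eq_coe]
      rw [div_eq_iff hden]
      linear_combination -hquad

/-- A finite fixed point satisfies the fixed-point quadratic. -/
lemma fix_quad (h : SL2C) (w : ℂ) (hf : Fixes h (w : OnePoint ℂ)) :
    h.1 1 0 * w^2 + (h.1 1 1 - h.1 0 0) * w - h.1 0 1 = 0 := by
  rw [Fixes, moebius_coe] at hf
  by_cases hden : h.1 1 0 * w + h.1 1 1 = 0
  · rw [if_pos hden] at hf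
    exact absurd hf.symm (OnePoint.coe_ne_infty w)
  · rw [if_neg hden, OnePoint.coe_eq_coe, div_eq_iff hden] at hf
    linear_combination -hf

/-- A non-identity transformation has at most two fixed points. -/
lemma fix_bound (h : SL2C) (hni : ¬ IsIdentity h) :
    ∃ z₁ z₂ : OnePoint ℂ, ∀ z, Fixes h z → z = z₁ ∨ z = z₂ := by
  have det := det_entries h
  set a := h.1 0 0 with ha; set b := h.1 0 1 with hb
  set c := h.1 1 0 with hc; set d := h.1 1 1 with hd
  by_cases hc0 : c = 0
  · by_cases had : a = d
    · -- then a = d = ±1 and b ≠ 0 (else identity); only ∞ fixed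
      refine ⟨OnePoint.infty, OnePoint.infty, ?_⟩
      intro z hz
      left
      cases z using OnePoint.rec with
      | infty => rfl
      | coe w =>
        exfalso
        have hq := fix_quad h w hz
        rw [← ha, ← hb, ← hc, ← hd, hc0, ← had] at hq
        simp only [zero_mul, zero_add, sub_self, zero_sub, neg_eq_zero] at hq
        -- hq : b = 0; then h = ±1
        have ha2 : a * a = 1 := by
          rw [had]; rw [hc0, had] at det; linear_combination det
        apply hni
        have hpm : a = 1 ∨ a = -1 := by
          have : (a - 1) * (a + 1) = 0 := by linear_combination ha2
          rcases mul_eq_zero.1 this with hk | hk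
          · left; linear_combination hk
          · right; linear_combination hk
        rcases hpm with hk | hk
        · have : h = 1 := by
            apply Subtype.ext
            ext i j
            fin_cases i <;> fin_cases j <;>
              simp [← ha, ← hb, ← hc, ← hd, hq, hc0, ← had, hk,
                Matrix.SpecialLinearGroup.coe_one, Matrix.one_apply]
          rw [this]; exact isIdentity_one
        · have : h = -1 := by
            apply Subtype.ext
            have e : ((-1 : SL2C)).1 = -(1 : Matrix (Fin 2) (Fin 2) ℂ) := by simp
            rw [e]
            ext i j
            fin_cases i <;> fin_cases j <;>
              simp [← ha, ← hb, ← hc, ← hd, hq, hc0, ← had, hk, Matrix.one_apply]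
          rw [this]; exact isIdentity_neg_one
    · refine ⟨OnePoint.infty, ((b / (d - a) : ℂ) : OnePoint ℂ), ?_⟩
      intro z hz
      cases z using OnePoint.rec with
      | infty => left; rfl
      | coe w =>
        right
        have hq := fix_quad h w hz
        rw [← ha, ← hb, ← hc, ← hd, hc0] at hq
        rw [OnePoint.coe_eq_coe, eq_div_iff (sub_ne_zero.2 (Ne.symm had))]
        linear_combination hq
  · obtain ⟨e, he⟩ := IsAlgClosed.exists_pow_nat_eq ((d - a)^2 + 4*(b*c)) zero_lt_two
    refine ⟨(((a - d + e) / (2*c) : ℂ) : OnePoint ℂ), (((a - d - e) / (2*c) : ℂ) : OnePoint ℂ), ?_⟩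
    intro z hz
    cases z using OnePoint.rec with
    | infty =>
      exfalso
      rw [Fixes, moebius_infty, ← hc, if_neg hc0] at hz
      exact OnePoint.coe_ne_infty _ hz
    | coe w =>
      have hq := fix_quad h w hz
      rw [← ha, ← hb, ← hc, ← hd] at hq
      have key : c * (w - (a - d + e)/(2*c)) * (w - (a - d - e)/(2*c)) = 0 := by
        have h2c : (2:ℂ)*c ≠ 0 := by simpa using hc0
        have expand : c * (w - (a - d + e)/(2*c)) * (w - (a - d - e)/(2*c)) =
            c*w^2 + (d-a)*w + ((a-d)^2 - e^2)/(4*c) := by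
          field_simp
          ring
        rw [expand, he]
        have : ((a-d)^2 - ((d - a)^2 + 4*(b*c)))/(4*c) = -b := by
          field_simp
          ring
        rw [this]
        linear_combination hq
      rcases mul_eq_zero.1 key with hk | hk
      · rcases mul_eq_zero.1 hk with hk' | hk'
        · exact absurd hk' hc0
        · left; rw [OnePoint.coe_eq_coe]; linear_combination hk'
      · right; rw [OnePoint.coe_eq_coe]; linear_combination hk

lemma mem_Z_iff (G : Subgroup SL2C) (h : SL2C) :
    h ∈ pslCentralizer G ↔ ∀ g ∈ G, ∀ z, moebius h (moebius g z) = moebius g (moebius h z) := by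
  unfold pslCentralizer
  simp only [Set.mem_setOf_eq, moebius_mul]

lemma Z_mul (G : Subgroup SL2C) (h₁ h₂ : SL2C) (m1 : h₁ ∈ pslCentralizer G)
    (m2 : h₂ ∈ pslCentralizer G) : h₁ * h₂ ∈ pslCentralizer G := by
  rw [mem_Z_iff] at m1 m2 ⊢
  intro g hg z
  simp only [moebius_mul]
  rw [m2 g hg, m1 g hg]

lemma Z_inv (G : Subgroup SL2C) (h : SL2C) (m : h ∈ pslCentralizer G) :
    h⁻¹ ∈ pslCentralizer G := by
  rw [mem_Z_iff] at m ⊢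
  intro g hg z
  have cancel : ∀ w, moebius h (moebius h⁻¹ w) = w := by
    intro w; rw [← moebius_mul, mul_inv_cancel, moebius_one]
  have cancel' : ∀ w, moebius h⁻¹ (moebius h w) = w := by
    intro w; rw [← moebius_mul, inv_mul_cancel, moebius_one]
  have := m g hg (moebius h⁻¹ z)
  rw [cancel] at this
  calc moebius h⁻¹ (moebius g z)
      = moebius h⁻¹ (moebius g (moebius h (moebius h⁻¹ z))) := by rw [cancel]
    _ = moebius h⁻¹ (moebius h (moebius g (moebius h⁻¹ z))) := by rw [← m g hg]
    _ = moebius g (moebius h⁻¹ z) := cancel' _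

lemma entry_continuous (i j : Fin 2) : Continuous (fun y : SL2C => y.1 i j) := by
  have h1 : Continuous (fun y : SL2C => (y : Matrix (Fin 2) (Fin 2) ℂ)) :=
    continuous_induced_dom
  have h2 : Continuous (fun m : Matrix (Fin 2) (Fin 2) ℂ => m i j) := by
    exact (continuous_apply j).comp (continuous_apply i)
  exact h2.comp h1

lemma exists_good (G : Subgroup SL2C) (hZ : ¬ DiscreteTopology ↥(pslCentralizer G)) :
    ∃ h ∈ pslCentralizer G, ¬ IsIdentity h ∧ trSq h ≠ 0 := by
  rw [discreteTopology_subtype_iff] at hZ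
  push_neg at hZ
  obtain ⟨x, hxZ, hxacc⟩ := hZ
  have hne : (𝓝[≠] x ⊓ 𝓟 (pslCentralizer G)).NeBot := hxacc
  -- the open set of y with trSq (y x⁻¹) ≠ 0 and y ≠ -x
  set M := ((x⁻¹ : SL2C) : Matrix (Fin 2) (Fin 2) ℂ) with hM
  have hcont : Continuous (fun y : SL2C => trSq (y * x⁻¹)) := by
    have heq : (fun y : SL2C => trSq (y * x⁻¹)) = fun y : SL2C =>
        (y.1 0 0 * M 0 0 + y.1 0 1 * M 1 0 + y.1 1 0 * M 0 1 + y.1 1 1 * M 1 1)^2 := by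
      funext y
      unfold trSq
      rw [Matrix.trace_fin_two]
      have e0 := mul_entry y x⁻¹ 0 0
      have e1 := mul_entry y x⁻¹ 1 1
      rw [e0, e1]
      ring
    rw [heq]
    exact (((((entry_continuous 0 0).mul continuous_const).add
      ((entry_continuous 0 1).mul continuous_const)).add
      ((entry_continuous 1 0).mul continuous_const)).add
      ((entry_continuous 1 1).mul continuous_const)).pow 2
  have hopen1 : IsOpen {y : SL2C | trSq (y * x⁻¹) ≠ 0} :=
    isOpen_compl_singleton.preimage hcont
  have hopen2 : IsOpen {y : SL2C | y ≠ -x} := by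
    have : {y : SL2C | y ≠ -x} =
        (fun y : SL2C => (y : Matrix (Fin 2) (Fin 2) ℂ)) ⁻¹' {m | m ≠ ((-x : SL2C) : Matrix (Fin 2) (Fin 2) ℂ)} := by
      ext y
      simp only [Set.mem_setOf_eq, Set.mem_preimage]
      constructor
      · intro hy hm; exact hy (Subtype.ext hm)
      · intro hy hm; exact hy (congrArg _ hm)
    rw [this]
    exact isOpen_compl_singleton.preimage continuous_induced_dom
  have hx1 : trSq (x * x⁻¹) ≠ 0 := by
    rw [mul_inv_cancel]
    unfold trSq
    rw [Matrix.SpecialLinearGroup.coe_one, Matrix.trace_one]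
    norm_num
  have hx2 : x ≠ -x := by
    intro hxx
    have hmat : (x : Matrix (Fin 2) (Fin 2) ℂ) = -(x : Matrix (Fin 2) (Fin 2) ℂ) := by
      conv_lhs => rw [hxx]
      simp
    have hent : ∀ i j : Fin 2, x.1 i j = 0 := by
      intro i j
      have := congrFun (congrFun hmat i) j
      simp only [Matrix.neg_apply] at this
      linear_combination this / 2
    have det := det_entries x
    rw [hent 0 0, hent 1 1, hent 0 1, hent 1 0] at det
    simp at det
  have hU : {y : SL2C | trSq (y * x⁻¹) ≠ 0} ∩ {y | y ≠ -x} ∈ 𝓝 x :=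
    (hopen1.inter hopen2).mem_nhds ⟨hx1, hx2⟩
  have hmem : ({y : SL2C | trSq (y * x⁻¹) ≠ 0} ∩ {y | y ≠ -x}) ∩ ({x}ᶜ ∩ pslCentralizer G) ∈
      𝓝[≠] x ⊓ 𝓟 (pslCentralizer G) :=
    Filter.inter_mem (Filter.mem_inf_of_left (nhdsWithin_le_nhds hU))
      (Filter.inter_mem (Filter.mem_inf_of_left self_mem_nhdsWithin)
        (Filter.mem_inf_of_right (Filter.mem_principal_self _)))
  obtain ⟨y, ⟨⟨hy1, hy2⟩, hyx, hyZ⟩⟩ := hne.nonempty_of_mem hmem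
  refine ⟨y * x⁻¹, Z_mul _ _ _ hyZ (Z_inv _ _ hxZ), ?_, hy1⟩
  intro hid
  rcases eq_pm_of_isIdentity _ hid with hk | hk
  · exact hyx (mul_inv_eq_one.mp hk)
  · apply hy2
    have : y * x⁻¹ * x = -1 * x := by rw [hk]
    rw [inv_mul_cancel_right] at this
    rw [this]
    simp

lemma vrep_nonzero (z : OnePoint ℂ) : ∃ i, vrep z i ≠ 0 := by
  cases z using OnePoint.rec with
  | infty => exact ⟨0, by rw [vrep_infty]; simp⟩
  | coe w => exact ⟨1, by rw [vrep_coe]; simp⟩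


/-- if G is a subgroup of PSL(2,ℂ) that is nontrivial (contains an
element acting nontrivially on ℂP¹) and whose centralizer in PSL(2,ℂ) is not
discrete, then there is a nonempty set Λ ⊆ ℂP¹ of cardinality at most 2 fixed
pointwise by every element of G. -/
theorem stmt2 (G : Subgroup SL2C)
    (hnontriv : ∃ g ∈ G, ¬ IsIdentity g)
    (hZ : ¬ DiscreteTopology ↥(pslCentralizer G)) :
    ∃ Λ : Finset (OnePoint ℂ), Λ.Nonempty ∧ Λ.card ≤ 2 ∧
      ∀ g ∈ G, ∀ z ∈ Λ, moebius g z = z := by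
  classical
  obtain ⟨h, hhZ, hni, htr⟩ := exists_good G hZ
  obtain ⟨z₀, hz₀⟩ := fix_exists h
  have hfixmap : ∀ g ∈ G, ∀ z, Fixes h z → Fixes h (moebius g z) := by
    intro g hg z hz
    have hc := (mem_Z_iff G h).1 hhZ g hg z
    rw [Fixes] at hz ⊢
    rw [hc, hz]
  by_cases huniq : ∀ z, Fixes h z → z = z₀
  · refine ⟨{z₀}, ⟨z₀, Finset.mem_singleton_self z₀⟩, by simp, ?_⟩
    intro g hg z hzmem
    rw [Finset.mem_singleton] at hzmem
    subst hzmem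
    exact huniq _ (hfixmap g hg z hz₀)
  · push_neg at huniq
    obtain ⟨z₁, hz₁, hz10⟩ := huniq
    obtain ⟨w₁, w₂, hbound⟩ := fix_bound h hni
    have hdichot : ∀ z, Fixes h z → z = z₀ ∨ z = z₁ := by
      intro z hz
      rcases hbound _ hz₀ with a0 | a0 <;> rcases hbound _ hz₁ with a1 | a1 <;>
        rcases hbound _ hz with az | az <;> simp_all
    refine ⟨{z₀, z₁}, ⟨z₀, by simp⟩, ?_, ?_⟩
    · apply le_trans (Finset.card_insert_le _ _); simp
    intro g hg z hzmem
    have f0 : Fixes h (moebius g z₀) := hfixmap g hg z₀ hz₀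
    have f1 : Fixes h (moebius g z₁) := hfixmap g hg z₁ hz₁
    have hmemz : z = z₀ ∨ z = z₁ := by
      rcases Finset.mem_insert.1 hzmem with hk | hk
      · exact Or.inl hk
      · exact Or.inr (Finset.mem_singleton.1 hk)
    rcases hdichot _ f0 with c0 | c0
    · rcases hdichot _ f1 with c1 | c1
      · exact absurd (moebius_inj g (c1.trans c0.symm)) hz10
      · rcases hmemz with rfl | rfl
        · exact c0
        · exact c1
    · -- swap case: derive a contradiction
      exfalso
      have hgz1 : moebius g z₁ = z₀ := by
        rcases hdichot _ f1 with c1 | c1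
        · exact c1
        · exact absurd (moebius_inj g (c1.trans c0.symm)) hz10
      have hne' : z₀ ≠ z₁ := fun e => hz10 e.symm
      have hind := vrep_indep hne'
      obtain ⟨μ, hμ0, hμ⟩ := rep_lemma h z₀
      rw [show moebius h z₀ = z₀ from hz₀] at hμ
      obtain ⟨κ, hκ0, hκ⟩ := rep_lemma h z₁
      rw [show moebius h z₁ = z₁ from hz₁] at hκ
      obtain ⟨ν, hν0, hν⟩ := rep_lemma g z₀
      rw [c0] at hν
      obtain ⟨i, hvi⟩ := vrep_nonzero z₁
      have e1 : (h.1 * g.1) *ᵥ vrep z₀ = (ν * κ) • vrep z₁ := by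
        rw [← Matrix.mulVec_mulVec, hν, Matrix.mulVec_smul, hκ, smul_smul]
      have e2 : (g.1 * h.1) *ᵥ vrep z₀ = (μ * ν) • vrep z₁ := by
        rw [← Matrix.mulVec_mulVec, hμ, Matrix.mulVec_smul, hν, smul_smul]
      rcases moebius_eq_pm (h*g) (g*h) (hhZ g hg) with hcomm | hanti
      · have hmat : h.1 * g.1 = g.1 * h.1 := by
          have := congrArg Subtype.val hcomm
          simpa [Matrix.SpecialLinearGroup.coe_mul] using this
        have hvv : (ν * κ) • vrep z₁ = (μ * ν) • vrep z₁ := by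
          rw [← e1, ← e2, hmat]
        have hcan : (ν * κ) * vrep z₁ i = (μ * ν) * vrep z₁ i := by
          simpa using congrFun hvv i
        have h2 : ν * κ = ν * μ := by
          have := mul_right_cancel₀ hvi hcan
          linear_combination this
        have hκμ : κ = μ := mul_left_cancel₀ hν0 h2
        obtain ⟨htrace, hdet⟩ := eigen_trace_det h (vrep z₀) (vrep z₁) μ κ hind hμ hκ
        have hμ2 : μ * μ = 1 := by rw [hκμ] at hdet; linear_combination hdet
        rw [hκμ] at hκ
        have hsc := eigen_scalar h (vrep z₀) (vrep z₁) μ hind hμ hκ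
        have hpm2 : μ = 1 ∨ μ = -1 := by
          have : (μ - 1) * (μ + 1) = 0 := by linear_combination hμ2
          rcases mul_eq_zero.1 this with hk | hk
          · left; linear_combination hk
          · right; linear_combination hk
        apply hni
        rcases hpm2 with rfl | rfl
        · have : h = 1 := by
            apply Subtype.ext
            rw [hsc, one_smul, Matrix.SpecialLinearGroup.coe_one]
          rw [this]; exact isIdentity_one
        · have : h = -1 := by
            apply Subtype.ext
            rw [hsc]
            have e : ((-1 : SL2C)).1 = -(1 : Matrix (Fin 2) (Fin 2) ℂ) := by simp
            rw [e]
            simp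
          rw [this]; exact isIdentity_neg_one
      · have hmat : h.1 * g.1 = -(g.1 * h.1) := by
          have := congrArg Subtype.val hanti
          simpa [Matrix.SpecialLinearGroup.coe_mul] using this
        have hvv : (ν * κ) • vrep z₁ = (-(μ * ν)) • vrep z₁ := by
          rw [← e1, hmat, Matrix.neg_mulVec, e2, neg_smul]
        have hcan : (ν * κ) * vrep z₁ i = (-(μ * ν)) * vrep z₁ i := by
          simpa using congrFun hvv i
        have h2 : ν * κ = ν * (-μ) := by
          have := mul_right_cancel₀ hvi hcan
          linear_combination this
        have hκμ : κ = -μ := mul_left_cancel₀ hν0 h2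
        obtain ⟨htrace, hdet⟩ := eigen_trace_det h (vrep z₀) (vrep z₁) μ κ hind hμ hκ
        apply htr
        unfold trSq
        rw [Matrix.trace_fin_two, htrace, hκμ]
        ring


end
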